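/- Let K be a field with a valuation v with value group Γ and residue field k of characteristic ≠ 2, and let t ∈ K have odd valuation (v(t) ∉ 2Γ). Let Q = ⟨a₁,…,aₙ⟩ be a quadratic form over K with all aᵢ of valuation 0. If ⟨1,t⟩ ⊗ Q is isotropic over K, then the residue form of Q is isotropic over k. -/

import Mathlib

/-- If `K` carries a valuation `v` with value group `Γ₀` (`v` surjective) and residue
field `k` of characteristic `≠ 2` (residue map `π`), `t ∈ K` has odd valuation
(`v t ∉ 2Γ`), and `Q = ⟨a₁,…,aₙ⟩` has unit coefficients, then isotropy of
`⟨1,t⟩ ⊗ Q = ⟨a₁,…,aₙ,ta₁,…,taₙ⟩` over `K` implies that the residue form of `Q`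
is isotropic over `k`. -/
theorem stmt1 {K : Type*} [Field K] {Γ₀ : Type*} [LinearOrderedCommGroupWithZero Γ₀]
    (v : Valuation K Γ₀) (hv : Function.Surjective v)
    {k : Type*} [Field k] (hk2 : (2 : k) ≠ 0)
    (π : v.integer →+* k) (hπ : Function.Surjective π)
    (hker : ∀ x : v.integer, π x = 0 ↔ v (x : K) < 1)
    (t : K) (ht : ¬ ∃ s : Γ₀, v t = s * s)
    {n : ℕ} (a : Fin n → v.integer) (ha : ∀ i, v ((a i : K)) = 1)
    (hiso : ∃ (x y : Fin n → K), (x ≠ 0 ∨ y ≠ 0) ∧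
      ∑ i, (a i : K) * x i ^ 2 + ∑ i, t * (a i : K) * y i ^ 2 = 0) :
    ∃ x : Fin n → k, x ≠ 0 ∧ ∑ i, π (a i) * x i ^ 2 = 0 := by
  by_contra hcon
  push_neg at hcon
  -- hcon : ∀ x, x ≠ 0 → ∑ π(aᵢ) xᵢ² ≠ 0
  have key : ∀ x : Fin n → K, x ≠ 0 →
      ∃ s : Γ₀, s ≠ 0 ∧ v (∑ i, (a i : K) * x i ^ 2) = s * s := by
    intro x hx
    obtain ⟨i₀, hi₀⟩ : ∃ i, x i ≠ 0 := by
      by_contra h; push_neg at h; exact hx (funext h)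
    obtain ⟨j, -, hj⟩ := Finset.exists_max_image Finset.univ (fun i => v (x i))
      ⟨i₀, Finset.mem_univ i₀⟩
    have hxj : x j ≠ 0 := by
      intro h
      apply hi₀
      have h2 := hj i₀ (Finset.mem_univ i₀)
      rw [h, map_zero] at h2
      simpa using le_antisymm h2 zero_le'
    have hvxj : v (x j) ≠ 0 := by simpa using hxj
    refine ⟨v (x j), hvxj, ?_⟩
    have hU : ∀ i, x i / x j ∈ v.integer := by
      intro i
      rw [Valuation.mem_integer_iff, map_div₀]
      exact div_le_one_of_le₀ (hj i (Finset.mem_univ i)) zero_le'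
    set U : Fin n → v.integer := fun i => ⟨x i / x j, hU i⟩ with hUdef
    have hUj : U j = 1 := by
      apply Subtype.ext
      simp [hUdef, div_self hxj]
    set A : v.integer := ∑ i, a i * U i ^ 2 with hAdef
    have hπA : π A ≠ 0 := by
      have hres : (fun i => π (U i)) ≠ 0 := by
        intro h
        have := congrFun h j
        rw [hUj, map_one] at this
        exact one_ne_zero this
      have := hcon (fun i => π (U i)) hres
      simpa [hAdef, map_sum] using this
    have hvA : v (A : K) = 1 := by
      refine le_antisymm A.2 ?_
      by_contra hlt
      exact hπA ((hker A).2 (lt_of_not_ge hlt))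
    have hsum : ∑ i, (a i : K) * x i ^ 2 = (x j) ^ 2 * (A : K) := by
      push_cast [hAdef, hUdef]
      rw [Finset.mul_sum]
      apply Finset.sum_congr rfl
      intro i _
      field_simp
    rw [hsum, map_mul, hvA, mul_one, pow_two, map_mul]
  obtain ⟨x, y, hxy, heq⟩ := hiso
  have htne : t ≠ 0 := by
    intro h
    exact ht ⟨0, by simp [h]⟩
  have hyeq : ∑ i, t * (a i : K) * y i ^ 2 = t * ∑ i, (a i : K) * y i ^ 2 := by
    rw [Finset.mul_sum]; apply Finset.sum_congr rfl; intro i _; ring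
  rcases eq_or_ne x 0 with hx | hx
  · have hy : y ≠ 0 := hxy.resolve_left (not_not.2 hx)
    obtain ⟨s, hs, hvs⟩ := key y hy
    have hzero : ∑ i, (a i : K) * y i ^ 2 = 0 := by
      have h1 : ∑ i, (a i : K) * x i ^ 2 = 0 := by simp [hx]
      rw [h1, zero_add, hyeq] at heq
      exact (mul_eq_zero.1 heq).resolve_left htne
    rw [hzero, map_zero] at hvs
    exact hs (mul_self_eq_zero.1 hvs.symm)
  · obtain ⟨s, hs, hvs⟩ := key x hx
    rcases eq_or_ne y 0 with hy | hy
    · have hzero : ∑ i, (a i : K) * x i ^ 2 = 0 := by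
        have h1 : ∑ i, t * (a i : K) * y i ^ 2 = 0 := by simp [hy]
        rw [h1, add_zero] at heq
        exact heq
      rw [hzero, map_zero] at hvs
      exact hs (mul_self_eq_zero.1 hvs.symm)
    · obtain ⟨s', hs', hvs'⟩ := key y hy
      have hneg : ∑ i, (a i : K) * x i ^ 2 = -(t * ∑ i, (a i : K) * y i ^ 2) := by
        rw [← hyeq]; linear_combination heq
      have hveq : s * s = v t * (s' * s') := by
        rw [← hvs, ← hvs', ← map_mul, hneg, Valuation.map_neg]
      apply ht
      refine ⟨s * s'⁻¹, ?_⟩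
      have : v t = s * s * (s' * s')⁻¹ := by
        rw [hveq, mul_assoc, mul_inv_cancel₀ (by exact mul_ne_zero hs' hs'), mul_one]
      rw [this, mul_inv, mul_mul_mul_comm]
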